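/- For every t with −3/2 < t < 0, the function G(t) = −(3/4)·(t+3)/(t·(2t+3)) satisfies 8·(t+1)·G(t)/(t+3) − G′(t)/G(t) + (2t+3)/(t² + 3t) = 0. -/

import Mathlib

/-- For every `t` with `−3/2 < t < 0`, the function
`G t = −(3/4)(t+3)/(t(2t+3))` satisfies the ordinary differential equation
`8(t+1)G(t)/(t+3) − G′(t)/G(t) + (2t+3)/(t² + 3t) = 0`
(the `t`-equation of the hybrid Monge–Ampère equation, with `G = Π″` the second
derivative of the symplectic potential of the Kronheimer metric on `WP[112]`). -/
theorem stmt_16 (G : ℝ → ℝ)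
    (hG : ∀ t : ℝ, G t = -(3 / 4) * (t + 3) / (t * (2 * t + 3))) :
    ∀ t : ℝ, -3 / 2 < t → t < 0 →
      8 * (t + 1) * G t / (t + 3) - deriv G t / G t + (2 * t + 3) / (t ^ 2 + 3 * t)
        = 0 := by
  intro t h1 h2
  have ht : t ≠ 0 := ne_of_lt h2
  have h2t : (2 * t + 3) > 0 := by linarith
  have ht3 : t + 3 > 0 := by linarith
  have hden : t * (2 * t + 3) ≠ 0 := mul_ne_zero ht (ne_of_gt h2t)
  have hGe : G = fun t => -(3 / 4) * (t + 3) / (t * (2 * t + 3)) := funext hG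
  have hd : HasDerivAt (fun t : ℝ => -(3 / 4) * (t + 3) / (t * (2 * t + 3)))
      ((-(3 / 4) * (t * (2 * t + 3)) - -(3 / 4) * (t + 3) * (1 * (2 * t + 3) + t * 2))
        / (t * (2 * t + 3)) ^ 2) t := by
    have := HasDerivAt.div
      (((hasDerivAt_id t).add_const 3).const_mul (-(3/4)))
      ((hasDerivAt_id t).mul (((hasDerivAt_id t).const_mul 2).add_const 3)) hden
    simpa [Pi.div_def, Pi.mul_def] using this
  have hderiv : deriv G t =
      (-(3 / 4) * (t * (2 * t + 3)) - -(3 / 4) * (t + 3) * (1 * (2 * t + 3) + t * 2))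
        / (t * (2 * t + 3)) ^ 2 := by
    rw [hGe]; exact hd.deriv
  have hGne : G t ≠ 0 := by
    rw [hG]
    apply div_ne_zero
    · intro h; nlinarith [h]
    · exact hden
  rw [hderiv, hG]
  have hq : t ^ 2 + 3 * t ≠ 0 := by nlinarith
  have hsq : (t * (2 * t + 3)) ^ 2 ≠ 0 := pow_ne_zero 2 hden
  field_simp
  ring
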